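/- arXiv:0908.0183 — 6 statements merged into one kernel-verified Lean document; each statement's English description precedes it below -/
import Mathlib

section
/- For every s ∈ Σ, the stabilizer in G of the point [1H, s] ∈ M_Σ under the G-action l • [gH, s] = [lgH, s] equals N ∩ G_s, the intersection of N with the stabilizer G_s = {g ∈ G : g • s = s} of s in G. -/
open Pointwise

section Resolution

variable {G M : Type*} [Group G] [MulAction G M]

/-- The relation on `G × Σ` whose quotient is the resolution `M_Σ = (G/H) ×_W Σ`:
`(g, s)` is identified with `(g * n⁻¹ * h, n • s)` for `n ∈ N` and `h ∈ H`
(taking `n = 1` this collapses `G` to the coset space `G/H`). -/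
def resRel (S : Set M) (N H : Subgroup G) : G × S → G × S → Prop :=
  fun p q => ∃ n ∈ N, ∃ h ∈ H, q.1 = p.1 * n⁻¹ * h ∧ (q.2 : M) = n • (p.2 : M)

/-- The resolution `M_Σ` of the `G`-set `M` with respect to `(Σ, N, H)`. -/
def Res (S : Set M) (N H : Subgroup G) : Type _ :=
  Quot (resRel S N H)

/-- The class `[gH, s]` in the resolution `M_Σ`. -/
def resMk (S : Set M) (N H : Subgroup G) (g : G) (s : S) : Res S N H :=
  Quot.mk _ (g, s)

/-- The `G`-action on the resolution: `l • [gH, s] = [lgH, s]`. -/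
instance resAction (S : Set M) (N H : Subgroup G) : MulAction G (Res S N H) where
  smul l := Quot.map (fun p => (l * p.1, p.2)) (by
    rintro ⟨g, s⟩ ⟨g', s'⟩ hr
    obtain ⟨n, hn, h, hh, hg, hs⟩ := hr
    exact ⟨n, hn, h, hh, by simp only at hg ⊢; rw [hg]; simp [mul_assoc], hs⟩)
  one_smul := by
    intro x
    induction x using Quot.ind with
    | mk p =>
      show Quot.mk (resRel S N H) ((1 : G) * p.1, p.2) = Quot.mk (resRel S N H) p
      rw [one_mul]
  mul_smul := by
    intro a b x
    induction x using Quot.ind with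
    | mk p =>
      show Quot.mk (resRel S N H) (a * b * p.1, p.2)
          = Quot.mk (resRel S N H) (a * (b * p.1), p.2)
      rw [mul_assoc]

end Resolution

theorem resRel_equivalence {G M : Type*} [Group G] [MulAction G M]
    (S : Set M) (N H : Subgroup G)
    (hnorm : ∀ n ∈ N, ∀ h ∈ H, n * h * n⁻¹ ∈ H) :
    Equivalence (resRel S N H) := by
  constructor
  · rintro ⟨g, s⟩
    exact ⟨1, N.one_mem, 1, H.one_mem, by simp, by simp⟩
  · rintro ⟨g, s⟩ ⟨g', s'⟩ ⟨n, hn, h, hh, hg, hs⟩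
    refine ⟨n⁻¹, N.inv_mem hn, n⁻¹ * h⁻¹ * n, ?_, ?_, ?_⟩
    · simpa using hnorm n⁻¹ (N.inv_mem hn) h⁻¹ (H.inv_mem hh)
    · simp only at hg ⊢
      rw [hg]; group
    · simp only at hs ⊢
      rw [hs]; simp
  · rintro ⟨g, s⟩ ⟨g', s'⟩ ⟨g'', s''⟩ ⟨n, hn, h, hh, hg, hs⟩ ⟨m, hm, k, hk, hg', hs'⟩
    refine ⟨m * n, N.mul_mem hm hn, (m * h * m⁻¹) * k,
      H.mul_mem (hnorm m hm h hh) hk, ?_, ?_⟩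
    · simp only at hg hg' ⊢
      rw [hg', hg]; group
    · simp only at hs hs' ⊢
      rw [hs', hs, mul_smul]

/-- The isotropy group of `[1H, s] ∈ M_Σ` is `N ∩ G_s`. -/
theorem resolution_stabilizer
    {G M : Type*} [Group G] [MulAction G M] (S : Set M) (N H : Subgroup G)
    (hHN : H ≤ N) (hnorm : ∀ n ∈ N, ∀ h ∈ H, n * h * n⁻¹ ∈ H)
    (hNS : ∀ n ∈ N, ∀ s ∈ S, n • s ∈ S)
    (hHS : ∀ h ∈ H, ∀ s ∈ S, h • s = s)
    (s : M) (hs : s ∈ S) :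
    MulAction.stabilizer G (resMk S N H 1 ⟨s, hs⟩)
      = N ⊓ MulAction.stabilizer G s := by
  ext l
  have hequiv := resRel_equivalence S N H hnorm
  constructor
  · intro hl
    have : (l • resMk S N H 1 ⟨s, hs⟩ : Res S N H) = resMk S N H 1 ⟨s, hs⟩ := hl
    have hrel : resRel S N H (l * 1, ⟨s, hs⟩) (1, ⟨s, hs⟩) := by
      rw [← hequiv.eqvGen_iff, ← Quot.eq]
      exact this
    obtain ⟨n, hn, h, hh, hg, hs'⟩ := hrel
    simp only [mul_one] at hg hs'
    have hl' : l = h⁻¹ * n := by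
      have h1 : l * (n⁻¹ * h) = 1 := by rw [← mul_assoc]; exact hg.symm
      rw [← inv_inv l, ← eq_inv_of_mul_eq_one_right h1, mul_inv_rev, inv_inv]
    constructor
    · rw [hl']; exact N.mul_mem (N.inv_mem (hHN hh)) hn
    · show l • s = s
      rw [hl', mul_smul, ← hs', hHS h⁻¹ (H.inv_mem hh) s hs]
  · rintro ⟨hlN, hls⟩
    show (l • resMk S N H 1 ⟨s, hs⟩ : Res S N H) = resMk S N H 1 ⟨s, hs⟩
    apply Quot.sound
    exact ⟨l, hlN, 1, H.one_mem, by simp, by simpa using hls.symm⟩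
end

section
/- The map ι : Σ → M_Σ, s ↦ [1H, s], is injective and satisfies ι(n • s) = n • ι(s) for all n ∈ N and s ∈ Σ; moreover, if Σ meets every G-orbit in M then the image ι(Σ) meets every G-orbit in M_Σ. -/
open Pointwise

/-- `Σ` is injectively and `N`-equivariantly mapped into `M_Σ` via `s ↦ [1H, s]`,
and if `Σ` meets every `G`-orbit in `M` then its image meets every `G`-orbit in `M_Σ`. -/
theorem resolution_section_embeds
    {G M : Type*} [Group G] [MulAction G M] (S : Set M) (N H : Subgroup G)
    (hHN : H ≤ N) (hnorm : ∀ n ∈ N, ∀ h ∈ H, n * h * n⁻¹ ∈ H)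
    (hNS : ∀ n ∈ N, ∀ s ∈ S, n • s ∈ S)
    (hHS : ∀ h ∈ H, ∀ s ∈ S, h • s = s) :
    (Function.Injective fun s : S => resMk S N H 1 s) ∧
    (∀ n (hn : n ∈ N) (s : M) (hs : s ∈ S),
      resMk S N H 1 ⟨n • s, hNS n hn s hs⟩ = n • resMk S N H 1 ⟨s, hs⟩) ∧
    ((∀ m : M, ∃ g : G, ∃ t ∈ S, m = g • t) →
      ∀ x : Res S N H, ∃ (l : G) (s : S), x = l • resMk S N H 1 s) := by
  -- invariant map Res → M
  have hresp : ∀ p q : G × S, resRel S N H p q → p.1 • (p.2 : M) = q.1 • (q.2 : M) := by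
    rintro ⟨g, s⟩ ⟨g', s'⟩ ⟨n, hn, h, hh, hg, hs⟩
    simp only at hg hs ⊢
    have hh' : n⁻¹ * h * n ∈ H := by
      have := hnorm n⁻¹ (N.inv_mem hn) h hh
      simpa using this
    rw [hg, hs]
    symm
    calc (g * n⁻¹ * h) • (n • (s : M)) = g • ((n⁻¹ * h * n) • (s : M)) := by
          simp [mul_smul, mul_assoc]
      _ = g • (s : M) := by rw [hHS _ hh' _ s.2]
  let f : Res S N H → M := Quot.lift (fun p : G × S => p.1 • (p.2 : M))
    (fun p q hpq => hresp p q hpq)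
  refine ⟨?_, ?_, ?_⟩
  · intro s t hst
    have : f (resMk S N H 1 s) = f (resMk S N H 1 t) := congrArg f hst
    have h2 : (s : M) = (t : M) := by simpa [f, resMk] using this
    exact Subtype.ext h2
  · intro n hn s hs
    have : resRel S N H (n, ⟨s, hs⟩) (1, ⟨n • s, hNS n hn s hs⟩) :=
      ⟨n, hn, 1, H.one_mem, by simp, rfl⟩
    have h1 := Quot.sound this
    show Quot.mk _ ((1 : G), (⟨n • s, hNS n hn s hs⟩ : S))
        = Quot.mk (resRel S N H) (n * 1, (⟨s, hs⟩ : S))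
    rw [mul_one, ← h1]
  · intro _ x
    induction x using Quot.ind with
    | mk p =>
      refine ⟨p.1, p.2, ?_⟩
      show Quot.mk (resRel S N H) p = Quot.mk (resRel S N H) (p.1 * 1, p.2)
      rw [mul_one]
end

section
/- Let Σ₀ ⊆ Σ be a subset such that for every s ∈ Σ₀ and every g ∈ G with g • s ∈ Σ₀ one has g ∈ N. Then the map φ̃ : [gH, s] ↦ g • s is injective on the subset {[gH, s] : g ∈ G, s ∈ Σ₀} of M_Σ; that is, whenever g • s = g' • s' with g, g' ∈ G and s, s' ∈ Σ₀, one has [gH, s] = [g'H, s'] in M_Σ. -/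
open Pointwise

/-- On classes coming from a subset `Σ₀ ⊆ Σ` all of whose points are moved into `Σ₀`
only by elements of `N`, the map `φ̃ : [gH, s] ↦ g • s` is injective. -/
theorem resolution_map_injective_on_regular
    {G M : Type*} [Group G] [MulAction G M] (S : Set M) (N H : Subgroup G)
    (hHN : H ≤ N) (hnorm : ∀ n ∈ N, ∀ h ∈ H, n * h * n⁻¹ ∈ H)
    (hNS : ∀ n ∈ N, ∀ s ∈ S, n • s ∈ S)
    (hHS : ∀ h ∈ H, ∀ s ∈ S, h • s = s)
    (S₀ : Set M) (hsub : S₀ ⊆ S)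
    (hreg : ∀ s ∈ S₀, ∀ g : G, g • s ∈ S₀ → g ∈ N) :
    ∀ (g g' : G) (s s' : M) (hs : s ∈ S₀) (hs' : s' ∈ S₀),
      g • s = g' • s' →
      resMk S N H g ⟨s, hsub hs⟩ = resMk S N H g' ⟨s', hsub hs'⟩ := by
  intro g g' s s' hs hs' heq
  have hn : (g'⁻¹ * g) • s = s' := by
    rw [mul_smul, heq, inv_smul_smul]
  have hnN : g'⁻¹ * g ∈ N := hreg s hs _ (hn ▸ hs')
  apply Quot.sound
  exact ⟨g'⁻¹ * g, hnN, 1, one_mem _, by group, by simpa using hn.symm⟩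
end

section
/- Write Σ̃ = {[1H, s] : s ∈ Σ} ⊆ M_Σ. Then n • Σ̃ = Σ̃ for all n ∈ N and every h ∈ H fixes Σ̃ pointwise, so the resolution (M_Σ)_{Σ̃} of the G-set M_Σ with respect to the data (Σ̃, N, H) can be formed; and the map (M_Σ)_{Σ̃} → M_Σ given by [gH, [1H, s]] ↦ [gH, s] is a well-defined G-equivariant bijection. -/
open Pointwise

section Resolution

variable {G M : Type*} [Group G] [MulAction G M]

/-- The canonical copy `Σ̃ = {[1H, s] : s ∈ Σ}` of `Σ` inside the resolution. -/
def tSigma (S : Set M) (N H : Subgroup G) : Set (Res S N H) :=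
  Set.range fun s : S => resMk S N H 1 s

end Resolution

section Helpers

variable {G M : Type*} [Group G] [MulAction G M]

lemma resMk_rel (S : Set M) (N H : Subgroup G) {n h : G} (hn : n ∈ N) (hh : h ∈ H)
    (g : G) (s t : S) (hts : (t : M) = n • (s : M)) :
    resMk S N H g s = resMk S N H (g * n⁻¹ * h) t :=
  Quot.sound ⟨n, hn, h, hh, rfl, hts⟩

lemma smul_resMk (S : Set M) (N H : Subgroup G) (l g : G) (s : S) :
    l • resMk S N H g s = resMk S N H (l * g) s := rfl

lemma resMk_smul (S : Set M) (N H : Subgroup G) {n : G} (hn : n ∈ N) (g : G) (s t : S)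
    (hts : (t : M) = n • (s : M)) :
    resMk S N H (g * n) s = resMk S N H g t := by
  have := resMk_rel S N H hn H.one_mem (g * n) s t hts
  simpa [mul_assoc] using this

lemma resMk_H (S : Set M) (N H : Subgroup G) {h : G} (hh : h ∈ H) (g : G) (s : S) :
    resMk S N H (g * h) s = resMk S N H g s := by
  have := resMk_rel S N H N.one_mem hh g s s (by simp)
  simpa using this.symm

end Helpers


/-- `Σ̃` is `N`-invariant and fixed pointwise by `H`, so the resolution
`(M_Σ)_Σ̃` can be formed; and `[gH, [1H, s]] ↦ [gH, s]` is a well-defined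
`G`-equivariant bijection `(M_Σ)_Σ̃ → M_Σ`. -/
theorem resolution_of_resolution
    {G M : Type*} [Group G] [MulAction G M] (S : Set M) (N H : Subgroup G)
    (hHN : H ≤ N) (hnorm : ∀ n ∈ N, ∀ h ∈ H, n * h * n⁻¹ ∈ H)
    (hNS : ∀ n ∈ N, ∀ s ∈ S, n • s ∈ S)
    (hHS : ∀ h ∈ H, ∀ s ∈ S, h • s = s) :
    (∀ n ∈ N, n • tSigma S N H = tSigma S N H) ∧
    (∀ h ∈ H, ∀ x ∈ tSigma S N H, h • x = x) ∧
    ∃ e : Res (tSigma S N H) N H → Res S N H,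
      (∀ (g : G) (s : S),
        e (resMk (tSigma S N H) N H g ⟨resMk S N H 1 s, Set.mem_range_self s⟩)
          = resMk S N H g s) ∧
      Function.Bijective e ∧
      ∀ (l : G) (x : Res (tSigma S N H) N H), e (l • x) = l • e x := by
  have hfix : ∀ k ∈ H, ∀ (x : (tSigma S N H : Set (Res S N H))) (g : G),
      (g * k) • (x : Res S N H) = g • (x : Res S N H) := by
    rintro k hk ⟨xv, s, rfl⟩ g
    dsimp
    rw [smul_resMk, smul_resMk, mul_one, mul_one, resMk_H S N H hk]
  refine ⟨?_, ?_, ?_⟩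
  · intro n hn
    ext x
    constructor
    · rintro ⟨y, ⟨s, rfl⟩, rfl⟩
      dsimp
      rw [smul_resMk, mul_one]
      have : resMk S N H (1 * n) s
          = resMk S N H 1 ⟨n • (s : M), hNS n hn s s.2⟩ :=
        resMk_smul S N H hn 1 s _ rfl
      rw [one_mul] at this
      rw [this]
      exact ⟨_, rfl⟩
    · rintro ⟨s, rfl⟩
      refine ⟨resMk S N H 1 ⟨n⁻¹ • (s : M), hNS n⁻¹ (N.inv_mem hn) s s.2⟩,
        ⟨_, rfl⟩, ?_⟩
      dsimp
      rw [smul_resMk, mul_one]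
      have : resMk S N H (1 * n) (⟨n⁻¹ • (s : M), hNS n⁻¹ (N.inv_mem hn) s s.2⟩ : S)
          = resMk S N H 1 s := resMk_smul S N H hn 1 _ s (by simp)
      rw [one_mul] at this
      rw [this]
  · rintro h hh x ⟨s, rfl⟩
    dsimp
    rw [smul_resMk, mul_one]
    have := resMk_H S N H hh 1 s
    rwa [one_mul] at this
  · refine ⟨Quot.lift (fun p => p.1 • (p.2 : Res S N H)) ?_, ?_, ?_, ?_⟩
    · rintro ⟨g, x⟩ ⟨g', x'⟩ ⟨n, hn, h, hh, hg, hx⟩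
      dsimp at hg hx ⊢
      rw [hx, hg, smul_smul]
      have hk : n⁻¹ * h * n ∈ H := by
        have := hnorm n⁻¹ (N.inv_mem hn) h hh
        rwa [inv_inv] at this
      have : g * n⁻¹ * h * n = g * (n⁻¹ * h * n) := by group
      rw [this, hfix _ hk x g]
    · intro g s
      show g • resMk S N H 1 s = resMk S N H g s
      rw [smul_resMk, mul_one]
    · have key : ∀ (g : G) (s : S),
          g • resMk S N H 1 s = resMk S N H g s := fun g s => by
        rw [smul_resMk, mul_one]
      have wd2 : ∀ (p q : G × S), resRel S N H p q →
          resMk (tSigma S N H) N H p.1 ⟨resMk S N H 1 p.2, Set.mem_range_self p.2⟩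
            = resMk (tSigma S N H) N H q.1 ⟨resMk S N H 1 q.2, Set.mem_range_self q.2⟩ := by
        rintro ⟨g, s⟩ ⟨g', s'⟩ ⟨n, hn, h, hh, hg, hs⟩
        refine Quot.sound ⟨n, hn, h, hh, hg, ?_⟩
        dsimp
        rw [key n s]
        have := resMk_smul S N H hn 1 s s' hs
        rw [one_mul] at this
        exact this.symm
      refine ⟨Function.LeftInverse.injective (g := Quot.lift _ wd2) ?_,
        Function.RightInverse.surjective (g := Quot.lift _ wd2) ?_⟩
      · rintro ⟨⟨g, xv, s, rfl⟩⟩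
        dsimp
        show Quot.lift _ wd2 (g • resMk S N H 1 s) = _
        rw [key g s]
        show Quot.mk _ (g, (⟨resMk S N H 1 s, Set.mem_range_self s⟩ : (tSigma S N H : Set (Res S N H)))) = _
        rfl
      · rintro ⟨⟨g, s⟩⟩
        show (g : G) • resMk S N H 1 s = _
        rw [key g s]
        rfl
    · intro l x
      induction x using Quot.ind with
      | mk p =>
        show (l * p.1) • (p.2 : Res S N H) = l • (p.1 • (p.2 : Res S N H))
        rw [mul_smul]
end

section
/- For every real number s, the inner product ⟪exp(s • A) Y, Y⟫ equals cos(δ s). -/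
set_option maxHeartbeats 1000000 in
set_option synthInstance.maxHeartbeats 400000 in
/-- If `A` is a skew-adjoint continuous operator on a real Hilbert space,
`‖Y‖ = 1` and `A (A Y) = -δ² • Y`, then `⟪exp(s • A) Y, Y⟫ = cos (δ s)`. -/
theorem inner_exp_smul_skewAdjoint_eq_cos
    {E : Type*} [NormedAddCommGroup E] [InnerProductSpace ℝ E] [CompleteSpace E]
    (A : E →L[ℝ] E) (hA : ∀ x y : E, (inner ℝ (A x) y : ℝ) = - inner ℝ x (A y))
    (Y : E) (hY : ‖Y‖ = 1) (δ : ℝ) (hAA : A (A Y) = -(δ ^ 2) • Y) :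
    ∀ s : ℝ, (inner ℝ ((NormedSpace.exp (s • A)) Y) Y : ℝ) = Real.cos (δ * s) := by
  intro s
  -- basic facts
  have hAY : (inner ℝ (A Y) Y : ℝ) = 0 := by
    linarith [hA Y Y, real_inner_comm Y (A Y)]
  have hYY : (inner ℝ Y Y : ℝ) = 1 := by
    rw [real_inner_self_eq_norm_sq, hY]; norm_num
  -- powers of A on Y
  have heven : ∀ k : ℕ, (A ^ (2 * k)) Y = ((-(δ ^ 2)) ^ k) • Y := by
    intro k
    induction k with
    | zero => simp
    | succ k ih =>
      have h2 : 2 * (k + 1) = 2 + 2 * k := by ring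
      rw [h2, pow_add, ContinuousLinearMap.mul_apply, ih, map_smul,
        show (A ^ 2) Y = A (A Y) by rw [pow_two, ContinuousLinearMap.mul_apply], hAA]
      rw [smul_smul, ← pow_succ]
  have hodd : ∀ k : ℕ, (A ^ (2 * k + 1)) Y = ((-(δ ^ 2)) ^ k) • A Y := by
    intro k
    rw [pow_succ', ContinuousLinearMap.mul_apply, heven, map_smul]
  -- exp as tsum applied to Y
  have hsum : Summable fun n : ℕ => ((n.factorial : ℝ)⁻¹) • (s • A) ^ n :=
    NormedSpace.expSeries_summable' (𝕂 := ℝ) (s • A)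
  have hexp : (NormedSpace.exp (s • A)) Y
      = ∑' n : ℕ, (((n.factorial : ℝ)⁻¹) • (s • A) ^ n) Y := by
    rw [NormedSpace.exp_eq_tsum (𝕂 := ℝ)]
    exact (ContinuousLinearMap.apply ℝ E Y).map_tsum hsum
  -- push inner inside
  have hsumY : Summable fun n : ℕ => (((n.factorial : ℝ)⁻¹) • (s • A) ^ n) Y :=
    hsum.map (ContinuousLinearMap.apply ℝ E Y) (ContinuousLinearMap.apply ℝ E Y).continuous
  have hinner : (inner ℝ ((NormedSpace.exp (s • A)) Y) Y : ℝ)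
      = ∑' n : ℕ, (inner ℝ ((((n.factorial : ℝ)⁻¹) • (s • A) ^ n) Y) Y : ℝ) := by
    rw [hexp, real_inner_comm]
    have h := (innerSL ℝ Y).map_tsum hsumY
    simp only [innerSL_apply_apply] at h
    rw [h]
    exact tsum_congr fun n => real_inner_comm _ _
  rw [hinner]
  -- the term function
  set t : ℕ → ℝ := fun n => (inner ℝ ((((n.factorial : ℝ)⁻¹) • (s • A) ^ n) Y) Y : ℝ) with ht
  have hteval : ∀ n : ℕ, t n = (n.factorial : ℝ)⁻¹ * s ^ n * (inner ℝ ((A ^ n) Y) Y : ℝ) := by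
    intro n
    simp only [ht, smul_pow, ContinuousLinearMap.smul_apply, real_inner_smul_left]
    ring
  have hst : Summable t :=
    (hsumY.map (innerSL ℝ Y) (innerSL ℝ Y).continuous).congr
      (fun n => real_inner_comm _ _)
  -- even part has sum cos(δ s), odd part is zero
  have hcos := Real.hasSum_cos (δ * s)
  have heq : ∀ k : ℕ, t (2 * k) = (-1) ^ k * (δ * s) ^ (2 * k) / ((2 * k).factorial : ℝ) := by
    intro k
    rw [hteval, heven, real_inner_smul_left, hYY, mul_one]
    have hd : (-(δ ^ 2 : ℝ)) ^ k = (-1) ^ k * δ ^ (2 * k) := by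
      rw [neg_pow, ← pow_mul]
    rw [hd, mul_pow]
    field_simp
  have hEven : HasSum (fun k : ℕ => t (2 * k)) (Real.cos (δ * s)) := by
    refine hcos.congr_fun fun k => heq k
  have hOdd : HasSum (fun k : ℕ => t (2 * k + 1)) 0 := by
    have hz : ∀ k : ℕ, t (2 * k + 1) = 0 := by
      intro k
      rw [hteval, hodd]
      simp [inner_smul_left, hAY]
    simpa [hz] using hasSum_zero
  have hfin := hEven.even_add_odd hOdd
  simpa using hfin.tsum_eq
end

section
/- Assume in addition that δ ≠ 0, and let p(n) denote the n-th odd prime (the n-th prime number greater than 2). Then the family of functions F : ℕ → (ℝ → E) defined by F(n)(t) = exp(((1 − t)/p(n)) • A) Y is linearly independent over ℝ in the real vector space of functions from ℝ to E. -/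
/-- The `n`-th odd prime (the `n`-th prime number greater than `2`), `0`-indexed. -/
noncomputable def nthOddPrime (n : ℕ) : ℕ :=
  Nat.nth (fun q => Nat.Prime q ∧ 2 < q) n

/-- The character `t ↦ exp (ω t i)` as a monoid hom from `Multiplicative ℝ` to `ℂ`. -/
noncomputable def expChar (ω : ℝ) : Multiplicative ℝ →* ℂ where
  toFun s := Complex.exp ((ω * Multiplicative.toAdd s : ℝ) * Complex.I)
  map_one' := by simp
  map_mul' x y := by
    simp only [toAdd_mul]
    rw [← Complex.exp_add]
    push_cast
    ring_nf

lemma expChar_injective : Function.Injective expChar := by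
  intro a b h
  by_contra hab
  have hd : a - b ≠ 0 := sub_ne_zero.mpr hab
  have h1 : expChar a (Multiplicative.ofAdd (Real.pi / (a - b))) =
      expChar b (Multiplicative.ofAdd (Real.pi / (a - b))) := by rw [h]
  simp only [expChar, MonoidHom.coe_mk, OneHom.coe_mk, toAdd_ofAdd] at h1
  rw [Complex.exp_eq_exp_iff_exp_sub_eq_one] at h1
  have h3 : a * (Real.pi / (a - b)) - b * (Real.pi / (a - b)) = Real.pi := by
    field_simp
  have h2 : ((a * (Real.pi / (a - b)) : ℝ) : ℂ) * Complex.I -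
      ((b * (Real.pi / (a - b)) : ℝ) : ℂ) * Complex.I = (Real.pi : ℂ) * Complex.I := by
    rw [← sub_mul, ← Complex.ofReal_sub, h3]
  rw [h2, Complex.exp_pi_mul_I] at h1
  norm_num at h1

set_option synthInstance.maxHeartbeats 1000000 in
set_option maxHeartbeats 1000000 in
/-- If `A` is a skew-adjoint continuous operator on a real Hilbert space, `‖Y‖ = 1`,
`A (A Y) = -δ² • Y` and `δ ≠ 0`, then the family of functions
`t ↦ exp (((1 - t)/pₙ) • A) Y`, indexed by `n` where `pₙ` is the `n`-th odd prime,
is linearly independent over `ℝ` in the space of functions `ℝ → E`. -/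
theorem exp_family_linearIndependent
    {E : Type*} [NormedAddCommGroup E] [InnerProductSpace ℝ E] [CompleteSpace E]
    (A : E →L[ℝ] E) (hA : ∀ x y : E, (inner ℝ (A x) y : ℝ) = - inner ℝ x (A y))
    (Y : E) (hY : ‖Y‖ = 1) (δ : ℝ) (hAA : A (A Y) = -(δ ^ 2) • Y) (hδ : δ ≠ 0) :
    LinearIndependent ℝ (fun n : ℕ => fun t : ℝ =>
      (NormedSpace.exp (((1 - t) / (nthOddPrime n : ℝ)) • A)) Y) := by
  -- inner product facts
  have hYY : (inner ℝ Y Y : ℝ) = 1 := by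
    rw [real_inner_self_eq_norm_sq, hY]; norm_num
  have hYAY : (inner ℝ Y (A Y) : ℝ) = 0 := by
    have h1 := hA Y Y
    have h2 := real_inner_comm (A Y) Y
    linarith
  have hAYY : (inner ℝ (A Y) Y : ℝ) = 0 := by
    rw [real_inner_comm]; exact hYAY
  have hAYAY : (inner ℝ (A Y) (A Y) : ℝ) = δ ^ 2 := by
    have h1 := hA Y (A Y)
    rw [hAA, inner_smul_right, hYY] at h1
    linarith
  -- projection lemma
  have proj : ∀ a b : ℝ, a • Y + b • A Y = 0 → a = 0 ∧ b = 0 := by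
    intro a b hab
    constructor
    · have h1 := congrArg (fun z => (inner ℝ Y z : ℝ)) hab
      simp only [inner_add_right, inner_smul_right, hYY, hYAY, inner_zero_right] at h1
      linarith
    · have h1 := congrArg (fun z => (inner ℝ (A Y) z : ℝ)) hab
      simp only [inner_add_right, inner_smul_right, hAYAY, hAYY, inner_zero_right] at h1
      have hδ2 : δ ^ 2 ≠ 0 := pow_ne_zero _ hδ
      have hb : b * δ ^ 2 = 0 := by linarith
      exact (mul_eq_zero.mp hb).resolve_right hδ2
  -- powers of A on Y
  have hpowE : ∀ k : ℕ, (A ^ (2 * k)) Y = ((-(δ ^ 2)) ^ k) • Y := by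
    intro k
    induction k with
    | zero => simp
    | succ k ih =>
      have h2 : A ^ (2 * (k + 1)) = A ^ (2 * k) * A * A := by
        rw [show 2 * (k + 1) = 2 * k + 1 + 1 by ring, pow_succ, pow_succ]
      rw [h2, ContinuousLinearMap.mul_apply, ContinuousLinearMap.mul_apply, hAA, map_smul, ih,
        smul_smul, mul_comm, ← pow_succ]
  have hpowO : ∀ k : ℕ, (A ^ (2 * k + 1)) Y = ((-(δ ^ 2)) ^ k) • A Y := by
    intro k
    rw [pow_succ', ContinuousLinearMap.mul_apply, hpowE k, map_smul]
  -- main formula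
  have key : ∀ s : ℝ, NormedSpace.exp (s • A) Y
      = Real.cos (δ * s) • Y + (Real.sin (δ * s) / δ) • A Y := by
    intro s
    have h0 : HasSum (fun n : ℕ => ((Nat.factorial n : ℝ)⁻¹) • (s • A) ^ n) (NormedSpace.exp (s • A)) := by
      simpa [NormedSpace.expSeries_apply_eq] using
        NormedSpace.expSeries_hasSum_exp (𝕂 := ℝ) (s • A)
    have h1 : HasSum (fun n : ℕ => (((Nat.factorial n : ℝ))⁻¹ * s ^ n) • (A ^ n) Y)
        (NormedSpace.exp (s • A) Y) := by
      have h := h0.mapL (ContinuousLinearMap.apply ℝ E Y)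
      convert h using 1
      funext m
      simp only [ContinuousLinearMap.apply_apply, smul_pow, ContinuousLinearMap.smul_apply]
      rw [smul_smul]
      rfl
    refine h1.unique (HasSum.even_add_odd ?_ ?_)
    · convert (Real.hasSum_cos (δ * s)).smul_const Y using 1
      funext k
      rw [hpowE k, smul_smul]
      congr 1
      rw [neg_pow, mul_pow, ← pow_mul]
      field_simp
    · convert ((Real.hasSum_sin (δ * s)).div_const δ).smul_const (A Y) using 1
      funext k
      rw [hpowO k, smul_smul]
      congr 1
      rw [neg_pow, mul_pow, ← pow_mul]
      field_simp
      ring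
  -- frequencies
  have hinf : {q : ℕ | Nat.Prime q ∧ 2 < q}.Infinite := by
    have h1 : ({p : ℕ | p.Prime} \ {q : ℕ | q ≤ 2}).Infinite :=
      Nat.infinite_setOf_prime.diff (Set.finite_le_nat 2)
    refine h1.mono ?_
    intro q hq
    exact ⟨hq.1, lt_of_not_ge hq.2⟩
  have hmem : ∀ n, Nat.Prime (nthOddPrime n) ∧ 2 < nthOddPrime n :=
    fun n => Nat.nth_mem_of_infinite hinf n
  have hppos : ∀ n, (0 : ℝ) < (nthOddPrime n : ℝ) := by
    intro n
    exact_mod_cast (hmem n).1.pos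
  set ω : ℕ → ℝ := fun n => δ / (nthOddPrime n : ℝ) with hω
  have hωinj : Function.Injective ω := by
    intro m n hmn
    simp only [hω] at hmn
    have h2 : δ * (nthOddPrime n : ℝ) = δ * (nthOddPrime m : ℝ) :=
      (div_eq_div_iff (hppos m).ne' (hppos n).ne').mp hmn
    have h3 : (nthOddPrime n : ℝ) = (nthOddPrime m : ℝ) := mul_left_cancel₀ hδ h2
    exact Nat.nth_injective hinf (by exact_mod_cast h3.symm)
  -- linear independence
  rw [linearIndependent_iff']
  intro S g hsum n hn
  -- evaluate: trig sums vanish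
  have htrig : ∀ u : ℝ, (∑ i ∈ S, g i * Real.cos (ω i * u)) = 0 ∧
      (∑ i ∈ S, g i * Real.sin (ω i * u)) = 0 := by
    intro u
    have hev := congrFun hsum (1 - u)
    simp only [Finset.sum_apply, Pi.smul_apply, Pi.zero_apply] at hev
    have hev' : ((∑ i ∈ S, g i * Real.cos (ω i * u)) • Y
        + ((∑ i ∈ S, g i * Real.sin (ω i * u)) / δ) • A Y) = 0 := by
      rw [Finset.sum_smul, Finset.sum_div, Finset.sum_smul, ← Finset.sum_add_distrib, ← hev]
      refine Finset.sum_congr rfl fun i hi => ?_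
      have h1u : 1 - (1 - u) = u := by ring
      rw [h1u, key (u / (nthOddPrime i : ℝ)),
        show δ * (u / (nthOddPrime i : ℝ)) = ω i * u from by rw [hω]; ring,
        smul_add, smul_smul, smul_smul, mul_div_assoc]
    obtain ⟨h1, h2⟩ := proj _ _ hev'
    refine ⟨h1, ?_⟩
    rcases div_eq_zero_iff.mp h2 with h | h
    · exact h
    · exact absurd h hδ
  -- pass to complex exponentials
  have hexp : (∑ i ∈ S, ((g i : ℂ)) • (expChar (ω i) : Multiplicative ℝ → ℂ)) = 0 := by
    funext u
    simp only [Finset.sum_apply, Pi.smul_apply, Pi.zero_apply, smul_eq_mul]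
    obtain ⟨h1, h2⟩ := htrig (Multiplicative.toAdd u)
    calc ∑ i ∈ S, (g i : ℂ) * expChar (ω i) u
        = ∑ i ∈ S, (((g i * Real.cos (ω i * Multiplicative.toAdd u) : ℝ) : ℂ)
          + ((g i * Real.sin (ω i * Multiplicative.toAdd u) : ℝ) : ℂ) * Complex.I) := by
          refine Finset.sum_congr rfl fun i _ => ?_
          show (g i : ℂ) * Complex.exp ((ω i * Multiplicative.toAdd u : ℝ) * Complex.I) = _
          rw [Complex.exp_mul_I, ← Complex.ofReal_cos, ← Complex.ofReal_sin]
          push_cast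
          ring
      _ = ((∑ i ∈ S, g i * Real.cos (ω i * Multiplicative.toAdd u) : ℝ) : ℂ)
          + ((∑ i ∈ S, g i * Real.sin (ω i * Multiplicative.toAdd u) : ℝ) : ℂ) * Complex.I := by
          rw [Finset.sum_add_distrib, ← Finset.sum_mul]
          push_cast
          ring
      _ = 0 := by rw [h1, h2]; simp
  have hLI := (linearIndependent_monoidHom (Multiplicative ℝ) ℂ).comp
    (fun n => expChar (ω n)) (expChar_injective.comp hωinj)
  rw [linearIndependent_iff'] at hLI
  have hg := hLI S (fun i => (g i : ℂ)) hexp n hn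
  exact_mod_cast show ((g n : ℂ)) = 0 from hg
end
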